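/- Let n₁ and n₂ = n₁ + k₂ be positive integers with k₂ < q^κ. Suppose there exists an index i ≥ 0 such that ε_{κ+i}(n₁) ≠ q - 1. Let i be the smallest such index. Then for all k > i, ε_{κ+k}(n₁) = ε_{κ+k}(n₂). -/

import Mathlib

/-- The `j`-th digit of `n` in base `q`. -/
def digit (q j n : ℕ) : ℕ := n / q ^ j % q

theorem stmt_13 (q κ : ℕ) (hq : 2 ≤ q)
    (n₁ n₂ k₂ : ℕ) (hn₁ : 1 ≤ n₁) (hk₂ : k₂ < q ^ κ) (hn₂ : n₂ = n₁ + k₂)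
    (i : ℕ) (hdi : digit q (κ + i) n₁ ≠ q - 1)
    (hmin : ∀ m < i, digit q (κ + m) n₁ = q - 1) :
    ∀ k, i < k → digit q (κ + k) n₁ = digit q (κ + k) n₂ := by
  intro k hk
  have hqpos : 0 < q := by omega
  set M := κ + i + 1 with hM
  have hpow : 0 < q ^ M := Nat.pow_pos hqpos
  have hd2 : digit q (κ + i) n₁ ≤ q - 2 := by
    have hlt : digit q (κ + i) n₁ < q := Nat.mod_lt _ hqpos
    omega
  have hple : q ^ κ ≤ q ^ (κ + i) := Nat.pow_le_pow_right hqpos (by omega)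
  have hpi : 0 < q ^ (κ + i) := Nat.pow_pos hqpos
  have hsplit : n₁ % q ^ M = n₁ % q ^ (κ + i) + q ^ (κ + i) * digit q (κ + i) n₁ := by
    have : q ^ M = q ^ (κ + i) * q := by rw [hM, pow_succ]
    rw [this, Nat.mod_mul]
    rfl
  have hr : n₁ % q ^ M + k₂ < q ^ M := by
    have h1 : n₁ % q ^ (κ + i) < q ^ (κ + i) := Nat.mod_lt _ hpi
    have h2 : q ^ (κ + i) * digit q (κ + i) n₁ ≤ q ^ (κ + i) * (q - 2) :=
      Nat.mul_le_mul_left _ hd2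
    have hMeq : q ^ M = q ^ (κ + i) * q := by rw [hM, pow_succ]
    have : q ^ (κ + i) * (q - 2) + 2 * q ^ (κ + i) ≤ q ^ (κ + i) * q := by
      have : q ^ (κ + i) * (q - 2) + 2 * q ^ (κ + i) = q ^ (κ + i) * q := by
        have := hq
        nlinarith [Nat.sub_add_cancel hq]
      omega
    omega
  have hquot : n₂ / q ^ M = n₁ / q ^ M := by
    have hdecomp : n₂ = q ^ M * (n₁ / q ^ M) + (n₁ % q ^ M + k₂) := by
      rw [hn₂]
      have := Nat.div_add_mod n₁ (q ^ M)
      omega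
    rw [hdecomp, Nat.mul_add_div hpow, Nat.div_eq_of_lt hr]; omega
  have hkeq : κ + k = M + (k - i - 1) := by omega
  have key : ∀ n : ℕ, digit q (κ + k) n = (n / q ^ M) / q ^ (k - i - 1) % q := by
    intro n
    rw [digit, hkeq, pow_add, ← Nat.div_div_eq_div_mul]
  rw [key, key, hquot]
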